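/- Call an index set I ⊆ {1,…,m} separable if there exists (w, b) ∈ ℝ^n × ℝ with y_i(⟨w, x_i⟩ + b) ≥ 1 for all i ∈ I. Suppose I* is separable and |I*| ≥ |I| for every separable subset I of {1,…,m}. If z* is a global minimizer of the hard-margin problem (P_{I*}), then for every λ > 0, z* is a local minimizer of (P_{0/1}). -/

import Mathlib

open scoped RealInnerProductSpace BigOperators

noncomputable section

/-- The 0/1 loss: `1` if `t > 0`, `0` otherwise. -/
def l01 (t : ℝ) : ℝ := if 0 < t then 1 else 0

/-- The ramp loss with parameter `γ`. -/
def ramp (γ t : ℝ) : ℝ := if γ < t then 1 else if 0 ≤ t then t else 0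

variable {n m : ℕ}

/-- The margin residual `u_i(z) = 1 - y_i (⟨w, x_i⟩ + b)` for `z = (w, b)`. -/
def uu (x : Fin m → EuclideanSpace ℝ (Fin n)) (y : Fin m → ℝ)
    (z : EuclideanSpace ℝ (Fin n) × ℝ) (i : Fin m) : ℝ :=
  1 - y i * (⟪z.1, x i⟫ + z.2)

/-- The 0/1-loss SVM objective `F_{0/1}`. -/
def F01 (x : Fin m → EuclideanSpace ℝ (Fin n)) (y : Fin m → ℝ) (lam : ℝ)
    (z : EuclideanSpace ℝ (Fin n) × ℝ) : ℝ :=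
  (1 / 2) * ‖z.1‖ ^ 2 + lam * ∑ i, l01 (uu x y z i)

/-- The hinge-loss SVM objective `F₁(z, c)`. -/
def F1 (x : Fin m → EuclideanSpace ℝ (Fin n)) (y : Fin m → ℝ)
    (c : EuclideanSpace ℝ (Fin m)) (z : EuclideanSpace ℝ (Fin n) × ℝ) : ℝ :=
  (1 / 2) * ‖z.1‖ ^ 2 + ∑ i, c i * max (uu x y z i) 0

/-- The dual quadratic objective `G(α) = (1/2)⟨α, Qα⟩ - Σ αᵢ`,
where `Q_{ij} = y_i y_j ⟨x_i, x_j⟩`. -/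
def Gfun (x : Fin m → EuclideanSpace ℝ (Fin n)) (y : Fin m → ℝ)
    (α : EuclideanSpace ℝ (Fin m)) : ℝ :=
  (1 / 2) * ∑ i, ∑ j, α i * (y i * y j * ⟪x i, x j⟫) * α j - ∑ i, α i

/-- The ℓ₀ "norm": the number of nonzero entries. -/
def norm0 (α : EuclideanSpace ℝ (Fin m)) : ℝ := (({i | α i ≠ 0} : Set (Fin m)).ncard : ℝ)

/-- Feasibility for the dual problem `(D_{0/1})`. -/
def DFeas (y : Fin m → ℝ) (α : EuclideanSpace ℝ (Fin m)) : Prop :=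
  (∀ i, 0 ≤ α i) ∧ ∑ i, y i * α i = 0

/-- `α*` is a local minimizer of the dual problem `(D_{0/1})` with parameter `μ`. -/
def DLocalMin (x : Fin m → EuclideanSpace ℝ (Fin n)) (y : Fin m → ℝ) (μ : ℝ)
    (αs : EuclideanSpace ℝ (Fin m)) : Prop :=
  DFeas y αs ∧ ∃ ε > 0, ∀ α : EuclideanSpace ℝ (Fin m), DFeas y α → dist α αs ≤ ε →
    Gfun x y αs + μ * norm0 αs ≤ Gfun x y α + μ * norm0 α

/-- The KKT system (KKT-T*) for `(D_I)` with `I = T* = {i : α*_i ≠ 0}`: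
`Qα* - 1 + u* + b* y = 0`; `α*_i ≥ 0`, `u*_i ≤ 0`, `α*_i u*_i = 0` on `T*`;
(`α*_i = 0` off `T*` holds by definition of `T*`); and `⟨y, α*⟩ = 0`. -/
def KKTT (x : Fin m → EuclideanSpace ℝ (Fin n)) (y : Fin m → ℝ)
    (αs us : EuclideanSpace ℝ (Fin m)) (bs : ℝ) : Prop :=
  (∀ i, (∑ j, (y i * y j * ⟪x i, x j⟫) * αs j) - 1 + us i + bs * y i = 0) ∧
  (∀ i, αs i ≠ 0 → 0 ≤ αs i ∧ us i ≤ 0 ∧ αs i * us i = 0) ∧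
  ∑ i, y i * αs i = 0

/-- The ramp-loss SVM objective of `(P_r)`. -/
def PrObj (x : Fin m → EuclideanSpace ℝ (Fin n)) (y : Fin m → ℝ) (ρ γ : ℝ)
    (z : EuclideanSpace ℝ (Fin n) × ℝ) : ℝ :=
  (1 / 2) * ‖z.1‖ ^ 2 + ρ * ∑ i, ramp γ (uu x y z i)

/-- The penalty objective of problem (pen). -/
def Pen (x : Fin m → EuclideanSpace ℝ (Fin n)) (y : Fin m → ℝ) (ρ γ : ℝ)
    (p : (EuclideanSpace ℝ (Fin n) × ℝ) × EuclideanSpace ℝ (Fin m)) : ℝ :=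
  (1 / 2) * ‖p.1.1‖ ^ 2 + ρ * ∑ i, |uu x y p.1 i - p.2 i| + ρ * γ * ∑ i, l01 (p.2 i)

/-- The smooth part `Φ(z, v)` of the penalty objective. -/
def Phi (x : Fin m → EuclideanSpace ℝ (Fin n)) (y : Fin m → ℝ) (ρ : ℝ)
    (p : (EuclideanSpace ℝ (Fin n) × ℝ) × EuclideanSpace ℝ (Fin m)) : ℝ :=
  (1 / 2) * ‖p.1.1‖ ^ 2 + ρ * ∑ i, |uu x y p.1 i - p.2 i|

/-- The KKT system (KKT-PI) for `(P_{0/1})` at `z*`. -/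
def KKTPI (x : Fin m → EuclideanSpace ℝ (Fin n)) (y : Fin m → ℝ)
    (zs : EuclideanSpace ℝ (Fin n) × ℝ) (αs : EuclideanSpace ℝ (Fin m)) : Prop :=
  zs.1 = ∑ i, (αs i * y i) • x i ∧
  (∀ i, uu x y zs i ≤ 0 → 0 ≤ αs i ∧ αs i * uu x y zs i = 0) ∧
  (∀ i, ¬ uu x y zs i ≤ 0 → αs i = 0) ∧
  ∑ i, y i * αs i = 0


/-- if `I*` is a separable index set of maximum cardinality and `z*`
globally minimizes the hard-margin problem `(P_{I*})`, then `z*` is a local minimizer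
of `(P_{0/1})` for every `λ > 0`. -/
theorem stmt15 {n m : ℕ} (hn : 0 < n) (hm : 0 < m)
    (x : Fin m → EuclideanSpace ℝ (Fin n)) (y : Fin m → ℝ)
    (hy : ∀ i, y i = 1 ∨ y i = -1)
    (Istar : Finset (Fin m))
    (hsep : ∃ z : EuclideanSpace ℝ (Fin n) × ℝ,
      ∀ i ∈ Istar, 1 ≤ y i * (⟪z.1, x i⟫ + z.2))
    (hmax : ∀ I : Finset (Fin m),
      (∃ z : EuclideanSpace ℝ (Fin n) × ℝ, ∀ i ∈ I, 1 ≤ y i * (⟪z.1, x i⟫ + z.2)) →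
      I.card ≤ Istar.card)
    (zs : EuclideanSpace ℝ (Fin n) × ℝ)
    (hfeas : ∀ i ∈ Istar, 1 ≤ y i * (⟪zs.1, x i⟫ + zs.2))
    (hglob : ∀ z : EuclideanSpace ℝ (Fin n) × ℝ,
      (∀ i ∈ Istar, 1 ≤ y i * (⟪z.1, x i⟫ + z.2)) →
      (1 / 2) * ‖zs.1‖ ^ 2 ≤ (1 / 2) * ‖z.1‖ ^ 2) :
    ∀ lam : ℝ, 0 < lam →
      ∃ ε > 0, ∀ z : EuclideanSpace ℝ (Fin n) × ℝ,
        dist z zs ≤ ε → F01 x y lam zs ≤ F01 x y lam z := by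
  intro lam hlam
  classical
  set Iz : (EuclideanSpace ℝ (Fin n) × ℝ) → Finset (Fin m) :=
    fun z => Finset.univ.filter (fun i => uu x y z i ≤ 0) with hIzdef
  have hmem : ∀ z i, i ∈ Iz z ↔ 1 ≤ y i * (⟪z.1, x i⟫ + z.2) := by
    intro z i
    simp only [hIzdef, Finset.mem_filter, Finset.mem_univ, true_and]
    unfold uu
    constructor <;> intro h <;> linarith
  have hcard : ∀ z, (Iz z).card ≤ Istar.card := by
    intro z
    exact hmax _ ⟨z, fun i hi => (hmem z i).mp hi⟩
  have hsub : Istar ⊆ Iz zs := fun i hi => (hmem zs i).mpr (hfeas i hi)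
  have hcard_zs : (Iz zs).card = Istar.card :=
    le_antisymm (hcard zs) (Finset.card_le_card hsub)
  have hloss : ∀ z, ∑ i, l01 (uu x y z i) = ((m : ℝ) - (Iz z).card) := by
    intro z
    have h1 : ∑ i, l01 (uu x y z i)
        = ((Finset.univ.filter (fun i => 0 < uu x y z i)).card : ℝ) := by
      simp [l01, Finset.sum_boole]
    have h2 : (Finset.univ.filter (fun i => 0 < uu x y z i)).card
        + (Iz z).card = m := by
      have := Finset.card_filter_add_card_filter_not
        (s := (Finset.univ : Finset (Fin m))) (p := fun i => 0 < uu x y z i)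
      simpa [hIzdef, not_lt, Finset.card_univ] using this
    rw [h1]
    have h3 := congrArg (fun k : ℕ => (k : ℝ)) h2
    push_cast at h3
    linarith
  have hcont : ∀ i, Continuous (fun z : EuclideanSpace ℝ (Fin n) × ℝ => uu x y z i) := by
    intro i
    unfold uu
    exact continuous_const.sub (continuous_const.mul
      ((Continuous.inner continuous_fst continuous_const).add continuous_snd))
  have hnc : Continuous (fun z : EuclideanSpace ℝ (Fin n) × ℝ => (1/2 : ℝ) * ‖z.1‖ ^ 2) := by
    fun_prop
  have hev1 : ∀ᶠ z in nhds zs, ∀ i, 0 < uu x y zs i → 0 < uu x y z i := by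
    rw [Filter.eventually_all]
    intro i
    by_cases h : 0 < uu x y zs i
    · have ht : Filter.Tendsto (fun z => uu x y z i) (nhds zs) (nhds (uu x y zs i)) :=
        (hcont i).continuousAt
      filter_upwards [ht.eventually_const_lt h] with z hz _
      exact hz
    · exact Filter.Eventually.of_forall (fun z hz => absurd hz h)
  have hev2 : ∀ᶠ z in nhds zs,
      (1/2 : ℝ) * ‖zs.1‖ ^ 2 - lam < (1/2 : ℝ) * ‖z.1‖ ^ 2 := by
    have ht : Filter.Tendsto (fun z : EuclideanSpace ℝ (Fin n) × ℝ =>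
        (1/2 : ℝ) * ‖z.1‖ ^ 2) (nhds zs) (nhds ((1/2 : ℝ) * ‖zs.1‖ ^ 2)) :=
      hnc.continuousAt
    exact ht.eventually_const_lt (by linarith)
  have hev := hev1.and hev2
  rw [Metric.eventually_nhds_iff_ball] at hev
  obtain ⟨ε, hε, hball⟩ := hev
  refine ⟨ε/2, half_pos hε, ?_⟩
  intro z hz
  have hzb : z ∈ Metric.ball zs ε := by
    rw [Metric.mem_ball]
    exact lt_of_le_of_lt hz (half_lt_self hε)
  obtain ⟨h1, h2⟩ := hball z hzb
  have hsubz : Iz z ⊆ Iz zs := by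
    intro i hi
    simp only [hIzdef, Finset.mem_filter, Finset.mem_univ, true_and] at hi ⊢
    by_contra hcon
    push_neg at hcon
    exact absurd hi (not_le.mpr (h1 i hcon))
  have hcz : (Iz z).card ≤ (Iz zs).card := Finset.card_le_card hsubz
  rw [F01, F01, hloss, hloss]
  rcases eq_or_lt_of_le hcz with heq | hlt
  · have hIeq : Iz z = Iz zs := Finset.eq_of_subset_of_card_le hsubz (le_of_eq heq.symm)
    have hfz : ∀ i ∈ Istar, 1 ≤ y i * (⟪z.1, x i⟫ + z.2) := by
      intro i hi
      exact (hmem z i).mp (hIeq ▸ hsub hi)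
    have := hglob z hfz
    rw [hIeq]
    linarith
  · have hlt' : ((Iz z).card : ℝ) + 1 ≤ ((Iz zs).card : ℝ) := by
      exact_mod_cast Nat.succ_le_of_lt hlt
    have : lam * ((m : ℝ) - (Iz zs).card) + lam
        ≤ lam * ((m : ℝ) - (Iz z).card) := by
      nlinarith
    linarith


end
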